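/- Let G be a finite group with a normal Sylow p-subgroup P of order p (p prime), let C = C_G(P) and n = |G : C|. Then G/C is cyclic, n divides p − 1, and k(G) ≥ n + (p−1)·k(U)/n, where U is a Hall p'-subgroup of C (so C = P × U). -/

import Mathlib

open Subgroup

def mulAutMultiplicative (A : Type*) [AddGroup A] : MulAut (Multiplicative A) ≃* Multiplicative (AddAut A) :=
  { MulEquiv.toAdditive with map_mul' := fun _ _ => rfl }


lemma aux3 (G : Type*) [Group G] [Finite G] (p : ℕ) (hp : p.Prime)
    (P C U : Subgroup G) (hPcard : Nat.card P = p) (hPC : P ≤ C) (hCnorm : C.Normal)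
    (hcomm : ∀ x ∈ P, ∀ c ∈ C, x * c = c * x)
    (hUC : U ≤ C) (hUcard : Nat.card C = p * Nat.card U) (hUp' : ¬ p ∣ Nat.card U)
    (hQcomm : ∀ x y : G ⧸ C, x * y = y * x)
    (n : ℕ) (hn : n = C.index) :
    (Nat.card (ConjClasses G) : ℝ) ≥
      n + ((p : ℝ) - 1) * Nat.card (ConjClasses U) / n := by
  classical
  have hnpos : 0 < n := by
    rw [hn]
    exact Nat.pos_of_ne_zero C.index_ne_zero_of_finite
  -- triviality of P ⊓ U
  have hPUtriv : ∀ g : G, g ∈ P → g ∈ U → g = 1 := by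
    intro g hgP hgU
    by_contra hne
    have h1 : orderOf g ∣ p := by
      rw [← hPcard, ← Subgroup.orderOf_mk g hgP]; exact orderOf_dvd_natCard _
    have h2 : orderOf g ∣ Nat.card U := by
      rw [← Subgroup.orderOf_mk g hgU]; exact orderOf_dvd_natCard _
    rcases (Nat.Prime.eq_one_or_self_of_dvd hp _ h1) with h | h
    · exact hne (orderOf_eq_one_iff.mp h)
    · exact hUp' (h ▸ h2)
  -- unique decomposition
  have huniq : ∀ x x' u u' : G, x ∈ P → x' ∈ P → u ∈ U → u' ∈ U →
      x * u = x' * u' → x = x' ∧ u = u' := by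
    intro x x' u u' hx hx' hu hu' h
    have key : x'⁻¹ * x = u' * u⁻¹ := by
      calc x'⁻¹ * x = x'⁻¹ * (x * u) * u⁻¹ := by group
      _ = x'⁻¹ * (x' * u') * u⁻¹ := by rw [h]
      _ = u' * u⁻¹ := by group
    have htriv : x'⁻¹ * x = 1 :=
      hPUtriv _ (mul_mem (inv_mem hx') hx) (key ▸ mul_mem hu' (inv_mem hu))
    have hxx : x = x' := by
      have := inv_mul_eq_one.mp htriv; exact this.symm
    refine ⟨hxx, ?_⟩
    have : u' * u⁻¹ = 1 := key ▸ htriv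
    have := mul_inv_eq_one.mp this
    exact this.symm
  -- existence of decomposition
  have hdecomp : ∀ c : C, ∃ (x : P) (u : U), (c : G) = x * u := by
    have minj : Function.Injective
        (fun z : P × U => (⟨z.1 * z.2, C.mul_mem (hPC z.1.2) (hUC z.2.2)⟩ : C)) := by
      rintro ⟨x, u⟩ ⟨x', u'⟩ hz
      have : (x : G) * u = x' * u' := by
        simpa [Subtype.ext_iff] using hz
      obtain ⟨h1, h2⟩ := huniq _ _ _ _ x.2 x'.2 u.2 u'.2 this
      simp [Prod.ext_iff, Subtype.ext_iff, h1, h2]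
    have mbij := (Nat.bijective_iff_injective_and_card _).mpr
      ⟨minj, by rw [Nat.card_prod, hPcard, hUcard]⟩
    intro c
    obtain ⟨⟨x, u⟩, hz⟩ := mbij.surjective c
    exact ⟨x, u, by rw [← hz]⟩
  -- order divisibility
  have hordp : ∀ x : G, x ∈ P → x ≠ 1 → orderOf x = p := by
    intro x hx hne
    have h1 : orderOf x ∣ p := by
      rw [← hPcard, ← Subgroup.orderOf_mk x hx]; exact orderOf_dvd_natCard _
    rcases (Nat.Prime.eq_one_or_self_of_dvd hp _ h1) with h | h
    · exact absurd (orderOf_eq_one_iff.mp h) hne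
    · exact h
  have hord : ∀ x u : G, x ∈ P → u ∈ U → x ≠ 1 → p ∣ orderOf (x * u) := by
    intro x u hx hu hxne
    have hcom : Commute x u := hcomm x hx u (hUC hu)
    have hordu : ¬ p ∣ orderOf u := fun hdvd =>
      hUp' (dvd_trans hdvd (by rw [← Subgroup.orderOf_mk u hu]; exact orderOf_dvd_natCard _))
    have hcop : (orderOf x).Coprime (orderOf u) := by
      rw [hordp x hx hxne]
      exact (Nat.Prime.coprime_iff_not_dvd hp).mpr hordu
    rw [hcom.orderOf_mul_eq_mul_orderOf_of_coprime hcop, hordp x hx hxne]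
    exact dvd_mul_right _ _
  -- the class map to the abelian quotient
  let φ : ConjClasses G → G ⧸ C := fun d => Quotient.liftOn' d (fun g => (g : G ⧸ C)) (by
    intro a b hab
    obtain ⟨z, hz⟩ := isConj_iff.mp hab
    show (a : G ⧸ C) = b
    rw [← hz]
    have : ((z * a * z⁻¹ : G) : G ⧸ C) = (z : G ⧸ C) * a * (z : G ⧸ C)⁻¹ := by
      simp
    rw [this, hQcomm ((z : G ⧸ C)) ((a : G ⧸ C)), mul_inv_cancel_right])
  have hφ : ∀ g : G, φ (ConjClasses.mk g) = (g : G ⧸ C) := fun g => rfl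
  have hφsurj : Function.Surjective φ := by
    intro q
    obtain ⟨g, hg⟩ := QuotientGroup.mk_surjective q
    exact ⟨ConjClasses.mk g, by rw [hφ, hg]⟩
  set A : Set (ConjClasses G) := {d | φ d ≠ 1} with hA
  set B : Set (ConjClasses G) := {ConjClasses.mk (1 : G)} with hB
  set S : Set (ConjClasses G) := {d | ∃ g : G, g ∈ C ∧ d = ConjClasses.mk g ∧ p ∣ orderOf g}
    with hS
  have hAB : Disjoint A B := by
    rw [Set.disjoint_right]
    rintro d (rfl : d = ConjClasses.mk 1)
    intro hd
    apply hd
    rw [hφ]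
    simp
  have hAS : Disjoint A S := by
    rw [Set.disjoint_right]
    rintro d ⟨g, hgC, rfl, hord'⟩ hd
    apply hd
    rw [hφ]
    exact (QuotientGroup.eq_one_iff g).mpr hgC
  have hBS : Disjoint B S := by
    rw [Set.disjoint_left]
    rintro d (rfl : d = ConjClasses.mk 1) ⟨g, hgC, hd, hord'⟩
    have : g = 1 := isConj_one_right.mp (ConjClasses.mk_eq_mk_iff_isConj.mp hd)
    rw [this, orderOf_one, Nat.dvd_one] at hord'
    exact hp.one_lt.ne' hord'
  -- counting A
  have hAcard : n - 1 ≤ A.ncard := by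
    have hsurj : Function.Surjective (fun d : A => (⟨φ d.1, d.2⟩ : {q : G ⧸ C // q ≠ 1})) := by
      rintro ⟨q, hq⟩
      obtain ⟨g, hg⟩ := QuotientGroup.mk_surjective q
      refine ⟨⟨ConjClasses.mk g, ?_⟩, ?_⟩
      · show φ (ConjClasses.mk g) ≠ 1
        rw [hφ, hg]; exact hq
      · simp only [Subtype.ext_iff, hφ, hg]
    have h1 := Nat.card_le_card_of_surjective _ hsurj
    have h2 : Nat.card {q : G ⧸ C // q ≠ 1} = n - 1 := by
      have h3 := Set.ncard_add_ncard_compl ({1} : Set (G ⧸ C))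
      rw [Set.ncard_singleton] at h3
      have h4 : Nat.card (G ⧸ C) = n := by rw [hn]; rfl
      have h5 : {q : G ⧸ C | q ≠ 1} = ({1} : Set (G ⧸ C))ᶜ := by
        ext q; simp
      have h6 : Nat.card {q : G ⧸ C // q ≠ 1} = ({1} : Set (G ⧸ C))ᶜ.ncard := by
        rw [← h5, ← Nat.card_coe_set_eq]
        rfl
      omega
    rw [h2] at h1
    exact le_trans h1 (le_of_eq (Nat.card_coe_set_eq A))
  -- main counting inequality
  have hcount : n + S.ncard ≤ Nat.card (ConjClasses G) := by
    have hd1 : Disjoint A (B ∪ S) := Set.disjoint_union_right.mpr ⟨hAB, hAS⟩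
    have he : (A ∪ (B ∪ S)).ncard = A.ncard + (B.ncard + S.ncard) := by
      rw [Set.ncard_union_eq hd1, Set.ncard_union_eq hBS]
    have hle : (A ∪ (B ∪ S)).ncard ≤ Nat.card (ConjClasses G) := by
      rw [← Set.ncard_univ]
      exact Set.ncard_le_ncard (Set.subset_univ _) (Set.toFinite _)
    have hBcard : B.ncard = 1 := Set.ncard_singleton _
    omega
  -- T : C-classes with order divisible by p
  set T : Set (ConjClasses C) := {t | ∃ c : C, t = ConjClasses.mk c ∧ p ∣ orderOf (c : G)}
    with hT
  -- lower bound on T via injection from (P \ 1) × ConjClasses U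
  have hTcard1 : (p - 1) * Nat.card (ConjClasses U) ≤ Nat.card T := by
    have wd : ∀ (x : P), (x : G) ≠ 1 → ∀ u u' : U, IsConj u u' →
        ConjClasses.mk (⟨x * u, C.mul_mem (hPC x.2) (hUC u.2)⟩ : C) =
        ConjClasses.mk (⟨x * u', C.mul_mem (hPC x.2) (hUC u'.2)⟩ : C) := by
      intro x hx u u' hconj
      obtain ⟨w, hw⟩ := isConj_iff.mp hconj
      apply ConjClasses.mk_eq_mk_iff_isConj.mpr
      apply isConj_iff.mpr
      refine ⟨⟨(w : G), hUC w.2⟩, ?_⟩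
      apply Subtype.ext
      push_cast
      have hw' : (w : G) * u * (w : G)⁻¹ = u' := by
        rw [← hw]; push_cast; ring_nf
      have hxw : (x : G) * w = w * x := hcomm x x.2 w (hUC w.2)
      calc (w : G) * ((x : G) * u) * (w : G)⁻¹
          = ((w : G) * x) * u * (w : G)⁻¹ := by group
        _ = ((x : G) * w) * u * (w : G)⁻¹ := by rw [hxw]
        _ = (x : G) * ((w : G) * u * (w : G)⁻¹) := by group
        _ = (x : G) * u' := by rw [hw']
    let F1 : {x : P // (x : G) ≠ 1} → ConjClasses U → ConjClasses C := fun x d =>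
      Quotient.liftOn' d
        (fun u => ConjClasses.mk (⟨x.1 * u, C.mul_mem (hPC x.1.2) (hUC u.2)⟩ : C))
        (fun u u' h => wd x.1 x.2 u u' h)
    have hF1mk : ∀ (x : {x : P // (x : G) ≠ 1}) (u : U),
        F1 x (ConjClasses.mk u) =
          ConjClasses.mk (⟨x.1 * u, C.mul_mem (hPC x.1.2) (hUC u.2)⟩ : C) := fun x u => rfl
    have hF1T : ∀ x d, F1 x d ∈ T := by
      intro x d
      induction d using Quotient.inductionOn' with
      | h u =>
        refine ⟨⟨(x.1 : G) * u, C.mul_mem (hPC x.1.2) (hUC u.2)⟩, rfl, ?_⟩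
        show p ∣ orderOf ((x.1 : G) * u)
        exact hord _ _ x.1.2 u.2 x.2
    have hF1inj : Function.Injective (fun z : {x : P // (x : G) ≠ 1} × ConjClasses U =>
        (⟨F1 z.1 z.2, hF1T z.1 z.2⟩ : T)) := by
      rintro ⟨⟨x, hx⟩, du⟩ ⟨⟨x', hx'⟩, du'⟩ h
      simp only [Subtype.ext_iff] at h
      induction du using Quotient.inductionOn' with
      | h u =>
      induction du' using Quotient.inductionOn' with
      | h u' =>
        rw [show (Quotient.mk'' u : ConjClasses U) = ConjClasses.mk u from rfl,
          show (Quotient.mk'' u' : ConjClasses U) = ConjClasses.mk u' from rfl] at h ⊢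
        rw [hF1mk, hF1mk] at h
        obtain ⟨c, hc⟩ := isConj_iff.mp (ConjClasses.mk_eq_mk_iff_isConj.mp h)
        obtain ⟨y, v, hyv⟩ := hdecomp c
        have hcG : (c : G) * ((x : G) * u) * (c : G)⁻¹ = (x' : G) * u' := by
          simpa using Subtype.ext_iff.mp hc
        have hwU : (v : G) * u * (v : G)⁻¹ ∈ U := by
          exact U.mul_mem (U.mul_mem v.2 u.2) (U.inv_mem v.2)
        have h1 : (c : G) * ((x : G) * u) * (c : G)⁻¹ =
            (x : G) * ((c : G) * u * (c : G)⁻¹) := by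
          have hxc := hcomm x x.2 c c.2
          calc (c : G) * ((x : G) * u) * (c : G)⁻¹
              = ((c : G) * x) * u * (c : G)⁻¹ := by group
            _ = ((x : G) * c) * u * (c : G)⁻¹ := by rw [← hxc]
            _ = (x : G) * ((c : G) * u * (c : G)⁻¹) := by group
        have h2 : (c : G) * u * (c : G)⁻¹ = (v : G) * u * (v : G)⁻¹ := by
          have hyw := hcomm y y.2 ((v : G) * u * (v : G)⁻¹) (hUC hwU)
          calc (c : G) * u * (c : G)⁻¹
              = (y : G) * ((v : G) * u * (v : G)⁻¹) * (y : G)⁻¹ := by rw [hyv]; group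
            _ = ((v : G) * u * (v : G)⁻¹) * (y : G) * (y : G)⁻¹ := by rw [hyw]
            _ = (v : G) * u * (v : G)⁻¹ := by group
        have hkey : (x : G) * ((v : G) * u * (v : G)⁻¹) = (x' : G) * u' := by
          rw [← h2, ← h1, hcG]
        obtain ⟨hxeq, hueq⟩ := huniq _ _ _ _ x.2 x'.2 hwU u'.2 hkey
        have hxx : (⟨x, hx⟩ : {x : P // (x : G) ≠ 1}) = ⟨x', hx'⟩ := by
          apply Subtype.ext; apply Subtype.ext; exact hxeq
        have hdu : ConjClasses.mk (α := U) u = ConjClasses.mk u' := by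
          apply ConjClasses.mk_eq_mk_iff_isConj.mpr
          apply isConj_iff.mpr
          exact ⟨v, Subtype.ext (by push_cast; exact hueq)⟩
        rw [Prod.ext_iff]
        exact ⟨hxx, hdu⟩
    have hcard1 : Nat.card ({x : P // (x : G) ≠ 1} × ConjClasses U) ≤ Nat.card T :=
      Nat.card_le_card_of_injective _ hF1inj
    have hcard2 : Nat.card {x : P // (x : G) ≠ 1} = p - 1 := by
      have h3 := Set.ncard_add_ncard_compl ({1} : Set P)
      rw [Set.ncard_singleton] at h3
      have h5 : {x : P | (x : G) ≠ 1} = ({1} : Set P)ᶜ := by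
        ext x
        simp only [Set.mem_setOf_eq, Set.mem_compl_iff, Set.mem_singleton_iff, ne_eq,
          OneMemClass.coe_eq_one]
      have h6 : Nat.card {x : P // (x : G) ≠ 1} = ({1} : Set P)ᶜ.ncard := by
        rw [← h5, ← Nat.card_coe_set_eq]
        rfl
      rw [h6, hPcard] at *
      omega
    rw [Nat.card_prod, hcard2] at hcard1
    exact hcard1
  -- upper bound: T is covered by at most n * S.ncard classes
  have hTcard2 : Nat.card T ≤ n * S.ncard := by
    let rep : S → G := fun s => s.2.choose
    have hrep : ∀ s : S, rep s ∈ C ∧ s.1 = ConjClasses.mk (rep s) ∧ p ∣ orderOf (rep s) :=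
      fun s => ⟨s.2.choose_spec.1, s.2.choose_spec.2.1, s.2.choose_spec.2.2⟩
    let F2 : (G ⧸ C) × S → ConjClasses C := fun z =>
      ConjClasses.mk (⟨z.1.out * rep z.2 * z.1.out⁻¹,
        hCnorm.conj_mem _ (hrep z.2).1 _⟩ : C)
    have hF2T : ∀ z, F2 z ∈ T := by
      intro z
      refine ⟨_, rfl, ?_⟩
      show p ∣ orderOf ((z.1.out * rep z.2 * z.1.out⁻¹ : G))
      have : orderOf (rep z.2) = orderOf (z.1.out * rep z.2 * z.1.out⁻¹) := by
        apply SemiconjBy.orderOf_eq (z.1.out)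
        show z.1.out * rep z.2 = (z.1.out * rep z.2 * z.1.out⁻¹) * z.1.out
        group
      exact this ▸ (hrep z.2).2.2
    have hF2surj : Function.Surjective (fun z => (⟨F2 z, hF2T z⟩ : T)) := by
      rintro ⟨t, c, rfl, hc⟩
      have hsmem : ConjClasses.mk (c : G) ∈ S := ⟨(c : G), c.2, rfl, hc⟩
      set s : S := ⟨ConjClasses.mk (c : G), hsmem⟩ with hs
      obtain ⟨hrC, hmk, hord'⟩ := hrep s
      obtain ⟨g, hg⟩ := isConj_iff.mp (ConjClasses.mk_eq_mk_iff_isConj.mp hmk)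
      set q : G ⧸ C := ((g⁻¹ : G) : G ⧸ C) with hq
      have hout : ((q.out : G) : G ⧸ C) = ((g⁻¹ : G) : G ⧸ C) := QuotientGroup.out_eq' q
      have hh : (g⁻¹)⁻¹ * q.out ∈ C := by
        rw [eq_comm] at hout
        exact (QuotientGroup.eq).mp hout
      refine ⟨⟨q, s⟩, ?_⟩
      apply Subtype.ext
      show F2 (q, s) = ConjClasses.mk c
      apply ConjClasses.mk_eq_mk_iff_isConj.mpr
      apply isConj_iff.mpr
      have hzmem : g⁻¹ * q.out⁻¹ ∈ C := by
        have hre : g⁻¹ * q.out⁻¹ = g⁻¹ * ((g⁻¹)⁻¹ * q.out)⁻¹ * (g⁻¹)⁻¹ := by group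
        rw [hre]
        exact hCnorm.conj_mem _ (C.inv_mem hh) g⁻¹
      refine ⟨⟨g⁻¹ * q.out⁻¹, hzmem⟩, ?_⟩
      apply Subtype.ext
      push_cast
      rw [← hg]
      group
    have hle := Nat.card_le_card_of_surjective _ hF2surj
    have hcards : Nat.card ((G ⧸ C) × S) = n * S.ncard := by
      rw [Nat.card_prod, Nat.card_coe_set_eq, hn]
      rfl
    rw [hcards] at hle
    exact hle
  -- final arithmetic
  have hTS : (p - 1) * Nat.card (ConjClasses U) ≤ n * S.ncard :=
    le_trans hTcard1 hTcard2
  have hn0 : (0 : ℝ) < n := by exact_mod_cast hnpos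
  have hM : ((p : ℝ) - 1) * Nat.card (ConjClasses U) / n ≤ S.ncard := by
    rw [div_le_iff₀ hn0]
    have hcast := (Nat.cast_le (α := ℝ)).mpr hTS
    push_cast [Nat.cast_sub hp.one_le] at hcast
    linarith
  have hcount' : (n : ℝ) + S.ncard ≤ Nat.card (ConjClasses G) := by
    exact_mod_cast hcount
  linarith

/-- If `G` is finite with a normal Sylow `p`-subgroup `P` of order `p`,
`C = C_G(P)` and `n = |G : C|`, then `G/C` is cyclic, `n ∣ p − 1`, and
`k(G) ≥ n + (p−1)·k(U)/n`, where `U` is a Hall `p'`-subgroup of `C`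
(so that `C = P × U`). -/
theorem stmt_13 (G : Type*) [Group G] [Finite G] (p : ℕ) (hp : p.Prime)
    (P : Sylow p G) (hPnormal : (P : Subgroup G).Normal)
    (hPcard : Nat.card (P : Subgroup G) = p)
    [hC : (Subgroup.centralizer (P : Set G)).Normal]
    (n : ℕ) (hn : n = (Subgroup.centralizer (P : Set G)).index)
    (U : Subgroup G) (hU : U ≤ Subgroup.centralizer (P : Set G))
    (hUcard : Nat.card (Subgroup.centralizer (P : Set G)) = p * Nat.card U)
    (hUp' : ¬ p ∣ Nat.card U) :
    IsCyclic (G ⧸ Subgroup.centralizer (P : Set G)) ∧ n ∣ p - 1 ∧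
    (Nat.card (ConjClasses G) : ℝ) ≥
      n + ((p : ℝ) - 1) * Nat.card (ConjClasses U) / n := by
  obtain ⟨hcyc, hdvd⟩ : IsCyclic (G ⧸ Subgroup.centralizer (P : Set G)) ∧ n ∣ p - 1 := by
    have fact : Fact p.Prime := ⟨hp⟩
    have hcard' : Nat.card (Multiplicative (ZMod p)) = p := by
      simp [Nat.card_eq_fintype_card]
    let e : ↥(P : Subgroup G) ≃* Multiplicative (ZMod p) := mulEquivOfPrimeCardEq hPcard hcard'
    let ι : MulAut ↥(P : Subgroup G) ≃* (ZMod p)ˣ :=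
      ((MulAut.congr e).trans (mulAutMultiplicative (ZMod p))).trans (ZMod.AddAutEquivUnits p).toMultiplicative
    let f : G →* (ZMod p)ˣ := ι.toMonoidHom.comp MulAut.conjNormal
    have hker : f.ker = Subgroup.centralizer (P : Set G) := by
      ext g
      simp only [MonoidHom.mem_ker, MonoidHom.comp_apply, MulEquiv.coe_toMonoidHom]
      show ι (MulAut.conjNormal g) = 1 ↔ _
      rw [show (ι (MulAut.conjNormal g) = 1) ↔ (MulAut.conjNormal (G := G) g = 1) from
        ⟨fun h => ι.injective (h.trans (map_one ι).symm), fun h => by rw [h, map_one]⟩]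
      constructor
      · intro h
        rw [Subgroup.mem_centralizer_iff]
        intro x hx
        have := congrArg (Subtype.val) (MulEquiv.ext_iff.mp h ⟨x, hx⟩)
        simp only [MulAut.conjNormal_apply, MulAut.one_apply] at this
        exact (mul_inv_eq_iff_eq_mul.mp this).symm
      · intro h
        ext x
        simp only [MulAut.conjNormal_apply, MulAut.one_apply]
        have := (Subgroup.mem_centralizer_iff.mp h) x x.2
        rw [mul_inv_eq_iff_eq_mul, ← this]
    have equiv : (G ⧸ Subgroup.centralizer (P : Set G)) ≃* f.range :=
      (QuotientGroup.quotientMulEquivOfEq hker).symm.trans (QuotientGroup.quotientKerEquivRange f)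
    have hcyc : IsCyclic f.range := by
      apply isCyclic_of_subgroup_isDomain ((Units.coeHom (ZMod p)).comp f.range.subtype)
      exact fun a b hab => Subtype.ext (Units.ext hab)
    constructor
    · exact isCyclic_of_surjective equiv.symm.toMonoidHom equiv.symm.surjective
    · have h1 : Nat.card (G ⧸ Subgroup.centralizer (P : Set G)) = n := by
        rw [hn]; rfl
      have h2 : Nat.card f.range ∣ Nat.card (ZMod p)ˣ := Subgroup.card_subgroup_dvd_card _
      have h3 : Nat.card (ZMod p)ˣ = p - 1 := by
        rw [Nat.card_eq_fintype_card, ZMod.card_units_eq_totient, Nat.totient_prime hp]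
      rw [h3] at h2
      rw [← h1, Nat.card_congr equiv.toEquiv]
      exact h2
  refine ⟨hcyc, hdvd, ?_⟩
  have fact : Fact p.Prime := ⟨hp⟩
  have hPcyc : IsCyclic ↥(P : Subgroup G) := isCyclic_of_prime_card hPcard
  have hPC : (P : Subgroup G) ≤ Subgroup.centralizer (P : Set G) := by
    intro x hx
    rw [Subgroup.mem_centralizer_iff]
    intro g hg
    letI := hPcyc.commGroup
    have := mul_comm (⟨g, hg⟩ : ↥(P : Subgroup G)) (⟨x, hx⟩ : ↥(P : Subgroup G))
    exact congrArg Subtype.val this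
  have hcomm : ∀ x ∈ (P : Subgroup G), ∀ c ∈ Subgroup.centralizer (P : Set G),
      x * c = c * x := by
    intro x hx c hc
    exact Subgroup.mem_centralizer_iff.mp hc x hx
  have hQcomm : ∀ x y : G ⧸ Subgroup.centralizer (P : Set G), x * y = y * x := by
    letI := hcyc.commGroup
    exact fun x y => mul_comm x y
  exact aux3 G p hp (P : Subgroup G) (Subgroup.centralizer (P : Set G)) U
    hPcard hPC hC hcomm hU hUcard hUp' hQcomm n hn
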